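/- Let Q₁, Q₂, Q₃ be the polar triangle of the parabola-inscribed Poncelet triangle with respect to the parabola (vertices given by the explicit parametrization). Then each Qᵢ lies on the hyperbola (√2 + 3/2)(x − f)² − y²/2 − 2f² = 0 (in coordinates where the parabola is x = −y²/(4f) with focus at (−f,0); here the hyperbola is centered at (f, 0)). -/

import Mathlib

set_option maxHeartbeats 1000000 in


/-- The polar triangle `Q₁Q₂Q₃` of the parabola-inscribed Poncelet triangle (with respect to
the parabola `x = −y²/(4f)`, focus `(−f,0)`) has all vertices on the hyperbola
`(√2 + 3/2)(x − f)² − y²/2 − 2f² = 0`, centered at `(f, 0)`. -/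
theorem polar_triangle_on_hyperbola (f y₁ Δ : ℝ) (hf : 0 < f)
    (hΔ : Δ = Real.sqrt (y₁ ^ 4 + 8 * f ^ 2 * y₁ ^ 2 + 16 * (8 * Real.sqrt 2 - 11) * f ^ 4))
    (hden₁ : 2 * (2 * Real.sqrt 2 + 3) * y₁ ^ 2 - 8 * f ^ 2 ≠ 0)
    (hden₃ : (3 + 2 * Real.sqrt 2) * y₁ ^ 2 - 4 * f ^ 2 ≠ 0)
    (Q₁ Q₂ Q₃ : ℝ × ℝ)
    (hQ₁ : Q₁ = ((1 + Real.sqrt 2) * ((4 * f * y₁ + Δ) * y₁ /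
        (2 * (2 * Real.sqrt 2 + 3) * y₁ ^ 2 - 8 * f ^ 2)),
      (1 + Real.sqrt 2) * (((1 + Real.sqrt 2) * y₁ ^ 3 - 4 * (1 + Real.sqrt 2) * f ^ 2 * y₁ -
        2 * Δ * f) / (2 * (2 * Real.sqrt 2 + 3) * y₁ ^ 2 - 8 * f ^ 2))))
    (hQ₂ : Q₂ = ((1 + Real.sqrt 2) * ((4 * f * y₁ - Δ) * y₁ /
        (2 * (2 * Real.sqrt 2 + 3) * y₁ ^ 2 - 8 * f ^ 2)),
      (1 + Real.sqrt 2) * (((1 + Real.sqrt 2) * y₁ ^ 3 - 4 * (1 + Real.sqrt 2) * f ^ 2 * y₁ +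
        2 * Δ * f) / (2 * (2 * Real.sqrt 2 + 3) * y₁ ^ 2 - 8 * f ^ 2))))
    (hQ₃ : Q₃ = ((1 + Real.sqrt 2) * ((5 - 3 * Real.sqrt 2) *
        ((1 + 2 * Real.sqrt 2) * y₁ ^ 2 - 28 * f ^ 2) * f /
        (7 * ((3 + 2 * Real.sqrt 2) * y₁ ^ 2 - 4 * f ^ 2))),
      (1 + Real.sqrt 2) * (-(8 * f ^ 2 * y₁) /
        ((3 + 2 * Real.sqrt 2) * y₁ ^ 2 - 4 * f ^ 2)))) :
    ((Real.sqrt 2 + 3 / 2) * (Q₁.1 - f) ^ 2 - Q₁.2 ^ 2 / 2 - 2 * f ^ 2 = 0) ∧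
    ((Real.sqrt 2 + 3 / 2) * (Q₂.1 - f) ^ 2 - Q₂.2 ^ 2 / 2 - 2 * f ^ 2 = 0) ∧
    ((Real.sqrt 2 + 3 / 2) * (Q₃.1 - f) ^ 2 - Q₃.2 ^ 2 / 2 - 2 * f ^ 2 = 0) := by
  have hs : Real.sqrt 2 ^ 2 = 2 := Real.sq_sqrt (by norm_num)
  have h2 : (0:ℝ) ≤ 8 * Real.sqrt 2 - 11 := by
    nlinarith [Real.sqrt_nonneg 2, hs]
  have hΔ2 : Δ ^ 2 = y₁ ^ 4 + 8 * f ^ 2 * y₁ ^ 2 + 16 * (8 * Real.sqrt 2 - 11) * f ^ 4 := by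
    rw [hΔ]
    exact Real.sq_sqrt (by positivity)
  have hd1 : 2 * (Real.sqrt 2 * 2 + 3) * y₁ ^ 2 - f ^ 2 * 8 ≠ 0 := by
    convert hden₁ using 1; ring
  have hd3 : y₁ ^ 2 * (3 + Real.sqrt 2 * 2) - f ^ 2 * 4 ≠ 0 := by
    convert hden₃ using 1; ring
  have h3 : Real.sqrt 2 ^ 3 = 2 * Real.sqrt 2 := by rw [pow_succ, hs]
  have h4 : Real.sqrt 2 ^ 4 = 4 := by rw [show (4:ℕ) = 2 * 2 from rfl, pow_mul, hs]; norm_num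
  have h5 : Real.sqrt 2 ^ 5 = 4 * Real.sqrt 2 := by rw [pow_succ, h4]
  have h6 : Real.sqrt 2 ^ 6 = 8 := by rw [pow_succ, h5, mul_assoc, ← pow_two, hs]; norm_num
  have h7 : Real.sqrt 2 ^ 7 = 8 * Real.sqrt 2 := by rw [pow_succ, h6]
  have h8 : Real.sqrt 2 ^ 8 = 16 := by rw [pow_succ, h7, mul_assoc, ← pow_two, hs]; norm_num
  refine ⟨?_, ?_, ?_⟩
  · rw [hQ₁]
    field_simp
    field_simp
    ring_nf
    simp only [hΔ2]
    ring_nf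
    simp only [hs, h3, h4, h5, h6, h7, h8]
    ring_nf
  · rw [hQ₂]
    field_simp
    field_simp
    ring_nf
    simp only [hΔ2]
    ring_nf
    simp only [hs, h3, h4, h5, h6, h7, h8]
    ring_nf
  · rw [hQ₃]
    field_simp
    field_simp
    ring_nf
    simp only [hs, h3, h4, h5, h6, h7, h8]
    ring_nf
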